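/- arXiv:1807.06914 — 3 statements merged into one kernel-verified Lean document; each statement's English description precedes it below -/
import Mathlib

section
/- If a graph G has two disjoint maximum independent sets, then the matching number of G is at least the independence number of G, i.e., μ(G) ≥ α(G). -/
open SimpleGraph

variable {V : Type*} [Fintype V] [DecidableEq V]

/-- A set of vertices is independent: no two of its vertices are adjacent. -/
def isIndep (G : SimpleGraph V) (S : Finset V) : Prop :=
  ∀ ⦃a⦄, a ∈ S → ∀ ⦃b⦄, b ∈ S → ¬ G.Adj a b

/-- The independence number `α(G)`. -/
noncomputable def indepNum (G : SimpleGraph V) : ℕ :=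
  sSup {n | ∃ S : Finset V, isIndep G S ∧ S.card = n}

/-- A maximum independent set: an independent set of size `α(G)`. -/
def isMaxIndep (G : SimpleGraph V) (S : Finset V) : Prop :=
  isIndep G S ∧ S.card = _root_.indepNum G

/-- `G` has two disjoint maximum independent sets. -/
def hasTwoDisjointMaxIndep (G : SimpleGraph V) : Prop :=
  ∃ S₁ S₂ : Finset V, isMaxIndep G S₁ ∧ isMaxIndep G S₂ ∧ Disjoint S₁ S₂

/-- A matching: a set of edges of `G`, pairwise sharing no vertex. -/
def isMatchingF (G : SimpleGraph V) (M : Finset (Sym2 V)) : Prop :=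
  (∀ e ∈ M, e ∈ G.edgeSet) ∧
  (∀ e ∈ M, ∀ f ∈ M, e ≠ f → ∀ v : V, v ∈ e → v ∉ f)

/-- The matching number `μ(G)`. -/
noncomputable def matchNum (G : SimpleGraph V) : ℕ :=
  sSup {n | ∃ M : Finset (Sym2 V), isMatchingF G M ∧ M.card = n}

/-- A shedding vertex: for every independent set `S` of `G − N[v]` there is a
neighbor `u` of `v` with `S ∪ {u}` independent. -/
def IsShedding (G : SimpleGraph V) (v : V) : Prop :=
  ∀ S : Finset V, isIndep G S → (∀ w ∈ S, w ≠ v ∧ ¬ G.Adj v w) →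
    ∃ u, G.Adj v u ∧ isIndep G (insert u S)

/-- A perfect matching of `G`: a matching covering every vertex. -/
def hasPerfectMatchingF (G : SimpleGraph V) : Prop :=
  ∃ M : Finset (Sym2 V), isMatchingF G M ∧ ∀ v : V, ∃ e ∈ M, v ∈ e

/-- The disjoint union of `k` copies of `K₂`. -/
def copiesK2 (k : ℕ) : SimpleGraph (Fin k × Fin 2) :=
  SimpleGraph.fromRel (fun p q => p.1 = q.1)

lemma indep_card_le (G : SimpleGraph V) (S : Finset V) (hS : isIndep G S) :
    S.card ≤ _root_.indepNum G := by
  apply le_csSup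
  · exact ⟨Fintype.card V, fun n ⟨T, _, hT⟩ => hT ▸ Finset.card_le_univ T⟩
  · exact ⟨S, hS, rfl⟩

/-- If `G` has two disjoint maximum independent sets then `μ(G) ≥ α(G)`. -/
theorem stmt4 (G : SimpleGraph V) (h : hasTwoDisjointMaxIndep G) :
    _root_.indepNum G ≤ matchNum G := by
  classical
  obtain ⟨S₁, S₂, ⟨hI₁, hc₁⟩, ⟨hI₂, hc₂⟩, hdisj⟩ := h
  -- Hall condition for the bipartite graph between S₁ and S₂
  set t : ↥S₁ → Finset V := fun x => S₂.filter (fun y => G.Adj x y) with ht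
  have hall : ∀ A : Finset ↥S₁, A.card ≤ (A.biUnion t).card := by
    intro A
    by_contra hlt
    push_neg at hlt
    set N := A.biUnion t with hN
    set A' := A.image (fun x : ↥S₁ => (x : V)) with hA'
    have hA'card : A'.card = A.card := Finset.card_image_of_injective A Subtype.coe_injective
    have hA'sub : A' ⊆ S₁ := by
      intro a ha
      obtain ⟨x, _, rfl⟩ := Finset.mem_image.mp ha
      exact x.2
    have hNsub : N ⊆ S₂ := by
      intro y hy
      obtain ⟨x, _, hy⟩ := Finset.mem_biUnion.mp hy
      exact (Finset.mem_filter.mp hy).1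
    -- the set A' ∪ (S₂ \ N) is independent
    have hT : isIndep G (A' ∪ (S₂ \ N)) := by
      intro a ha b hb hab
      rcases Finset.mem_union.mp ha with ha | ha <;>
        rcases Finset.mem_union.mp hb with hb | hb
      · exact hI₁ (hA'sub ha) (hA'sub hb) hab
      · obtain ⟨x, hx, rfl⟩ := Finset.mem_image.mp ha
        have : b ∈ N := Finset.mem_biUnion.mpr ⟨x, hx, Finset.mem_filter.mpr
          ⟨(Finset.mem_sdiff.mp hb).1, hab⟩⟩
        exact (Finset.mem_sdiff.mp hb).2 this
      · obtain ⟨x, hx, rfl⟩ := Finset.mem_image.mp hb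
        have : a ∈ N := Finset.mem_biUnion.mpr ⟨x, hx, Finset.mem_filter.mpr
          ⟨(Finset.mem_sdiff.mp ha).1, hab.symm⟩⟩
        exact (Finset.mem_sdiff.mp ha).2 this
      · exact hI₂ (Finset.mem_sdiff.mp ha).1 (Finset.mem_sdiff.mp hb).1 hab
    have hbig : S₂.card < (A' ∪ (S₂ \ N)).card := by
      have hdisj2 : Disjoint A' (S₂ \ N) :=
        (hdisj.mono_left hA'sub).mono_right (Finset.sdiff_subset)
      rw [Finset.card_union_of_disjoint hdisj2, hA'card, Finset.card_sdiff_of_subset hNsub]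
      have := Finset.card_le_card hNsub
      omega
    have := indep_card_le G _ hT
    rw [← hc₂] at this
    omega
  -- apply Hall
  obtain ⟨f, hfinj, hf⟩ := (Finset.all_card_le_biUnion_card_iff_exists_injective t).mp hall
  have hfS₂ : ∀ x, f x ∈ S₂ := fun x => (Finset.mem_filter.mp (hf x)).1
  have hfAdj : ∀ x : ↥S₁, G.Adj x (f x) := fun x => (Finset.mem_filter.mp (hf x)).2
  -- build the matching
  set M : Finset (Sym2 V) := S₁.attach.image (fun x : ↥S₁ => s(x.1, f x)) with hM
  have hmem : ∀ e ∈ M, ∃ x : ↥S₁, e = s(x.1, f x) := by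
    intro e he
    obtain ⟨x, _, rfl⟩ := Finset.mem_image.mp he
    exact ⟨x, rfl⟩
  have hne : ∀ x : ↥S₁, (x : V) ≠ f x := fun x => (hfAdj x).ne
  have hvx : ∀ x y : ↥S₁, (x : V) ≠ f y := by
    intro x y hxy
    exact (Finset.disjoint_left.mp hdisj) x.2 (hxy ▸ hfS₂ y)
  have hMmatch : isMatchingF G M := by
    constructor
    · intro e he
      obtain ⟨x, rfl⟩ := hmem e he
      exact (hfAdj x)
    · intro e he f' hf' hef v hve hvf
      obtain ⟨x, rfl⟩ := hmem e he
      obtain ⟨y, rfl⟩ := hmem f' hf'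
      rw [Sym2.mem_iff] at hve hvf
      rcases hve with rfl | rfl <;> rcases hvf with h1 | h1
      · exact hef (by rw [Subtype.coe_injective h1])
      · exact hvx x y h1
      · exact hvx y x h1.symm
      · exact hef (by rw [hfinj h1])
  have hMcard : M.card = S₁.card := by
    rw [hM, Finset.card_image_of_injective _ ?_, Finset.card_attach]
    intro x y hxy
    simp only [Sym2.eq, Sym2.rel_iff', Prod.mk.injEq, Prod.swap_prod_mk] at hxy
    rcases hxy with ⟨h1, _⟩ | ⟨h1, h2⟩
    · exact Subtype.coe_injective h1
    · exact absurd h1 (hvx x y)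
  calc _root_.indepNum G = M.card := by rw [hMcard, hc₁]
    _ ≤ matchNum G := by
        apply le_csSup
        · exact ⟨Fintype.card (Sym2 V), fun n ⟨T, _, hT⟩ => hT ▸ Finset.card_le_univ T⟩
        · exact ⟨M, hMmatch, rfl⟩
end

section
/- A tree T has a maximum independent set consisting entirely of shedding vertices if and only if T is isomorphic to K₂. -/
open SimpleGraph

variable {V : Type*} [Fintype V] [DecidableEq V]

set_option linter.unusedSectionVars false

lemma card_le_indepNum {G : SimpleGraph V} {S : Finset V} (h : isIndep G S) :
    S.card ≤ _root_.indepNum G := by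
  apply le_csSup
  · exact ⟨Fintype.card V, fun n hn => by obtain ⟨S', _, rfl⟩ := hn; exact S'.card_le_univ⟩
  · exact ⟨S, h, rfl⟩

lemma tree_no_triangle {T : SimpleGraph V} (hT : T.IsTree) {a b c : V}
    (hab : T.Adj a b) (hbc : T.Adj b c) (hca : T.Adj c a) : False := by
  obtain ⟨p, -, hu⟩ := hT.existsUnique_path a c
  have h1 : (Walk.cons hca.symm Walk.nil : T.Walk a c).IsPath := by
    simp [Walk.isPath_def, hca.ne']
  have h2 : (Walk.cons hab (Walk.cons hbc Walk.nil) : T.Walk a c).IsPath := by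
    simp [Walk.isPath_def, hab.ne, hbc.ne, hca.ne']
  have := (hu _ h1).trans (hu _ h2).symm
  have := congrArg Walk.length this
  simp at this

set_option linter.unusedSectionVars false

/-- two distinct paths of lengths 2 and 3 contradict tree-ness -/
lemma tree_no_c5 {T : SimpleGraph V} (hT : T.IsTree) {v u u' x y : V}
    (h1 : T.Adj v u) (h2 : T.Adj u x) (h3 : T.Adj v u') (h4 : T.Adj u' y)
    (h5 : T.Adj y x) (hvx : v ≠ x) (hvy : v ≠ y) (huu' : u ≠ u')
    (hux : u ≠ x) (huy : u ≠ y) (hu'x : u' ≠ x) : False := by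
  obtain ⟨p, -, hu⟩ := hT.existsUnique_path v x
  have hP1 : (Walk.cons h1 (Walk.cons h2 Walk.nil) : T.Walk v x).IsPath := by
    simp [Walk.isPath_def, h1.ne, hvx, hux]
  have hP2 : (Walk.cons h3 (Walk.cons h4 (Walk.cons h5 Walk.nil)) : T.Walk v x).IsPath := by
    simp [Walk.isPath_def, h3.ne, hvy, hvx, h4.ne, hu'x, h5.ne]
  have := (hu _ hP1).trans (hu _ hP2).symm
  have := congrArg Walk.length this
  simp at this

/-- A shedding vertex of a tree has a leaf neighbor. -/
lemma shedding_support {T : SimpleGraph V} (hT : T.IsTree) {v : V}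
    (hv : IsShedding T v) : ∃ u, T.Adj v u ∧ ∀ w, T.Adj u w → w = v := by
  by_contra hcon
  push_neg at hcon
  classical
  -- for each neighbor u of v, pick f u adjacent to u, f u ≠ v
  have hex : ∀ u, T.Adj v u → ∃ w, T.Adj u w ∧ w ≠ v := by
    intro u hu
    obtain ⟨w, hw1, hw2⟩ := hcon u hu
    exact ⟨w, hw1, hw2⟩
  set f : V → V := fun u => if h : ∃ w, T.Adj u w ∧ w ≠ v then h.choose else u with hf
  have hfadj : ∀ u, T.Adj v u → T.Adj u (f u) ∧ f u ≠ v := by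
    intro u hu
    have h : ∃ w, T.Adj u w ∧ w ≠ v := hex u hu
    simpa [hf, dif_pos h] using h.choose_spec
  have hfnadj : ∀ u, T.Adj v u → ¬ T.Adj v (f u) := by
    intro u hu hvf
    exact tree_no_triangle hT hu (hfadj u hu).1 hvf.symm
  set N := T.neighborFinset v with hN
  set S := N.image f with hS
  have hSmem : ∀ w ∈ S, ∃ u, T.Adj v u ∧ w = f u := by
    intro w hw
    obtain ⟨u, hu, rfl⟩ := Finset.mem_image.1 hw
    exact ⟨u, (T.mem_neighborFinset v u).1 hu, rfl⟩
  have hSind : isIndep T S := by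
    intro a ha b hb hab
    obtain ⟨u, hu, rfl⟩ := hSmem a ha
    obtain ⟨u', hu', rfl⟩ := hSmem b hb
    have huu' : u ≠ u' := by rintro rfl; exact T.irrefl hab
    -- f u ≠ u' and f u' ≠ u (else triangle)
    have hfu_ne : f u ≠ u' := by
      rintro h
      exact tree_no_triangle hT hu (h ▸ (hfadj u hu).1) hu'.symm
    have hfu'_ne : f u' ≠ u := by
      rintro h
      exact tree_no_triangle hT hu' (h ▸ (hfadj u' hu').1) hu.symm
    exact tree_no_c5 hT hu (hfadj u hu).1 hu' (hfadj u' hu').1 hab.symm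
      ((hfadj u hu).2.symm) ((hfadj u' hu').2.symm) huu'
      ((hfadj u hu).1).ne hfu'_ne.symm hfu_ne.symm
  have hSavoid : ∀ w ∈ S, w ≠ v ∧ ¬ T.Adj v w := by
    intro w hw
    obtain ⟨u, hu, rfl⟩ := hSmem w hw
    exact ⟨(hfadj u hu).2, hfnadj u hu⟩
  obtain ⟨u, huadj, hind⟩ := hv S hSind hSavoid
  have hfu : f u ∈ S := Finset.mem_image.2 ⟨u, (T.mem_neighborFinset v u).2 huadj, rfl⟩
  exact hind (Finset.mem_insert_self u S) (Finset.mem_insert_of_mem hfu) (hfadj u huadj).1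

lemma leaf_shedding {T : SimpleGraph V} {v u : V}
    (hadj : T.Adj v u) (hleaf : ∀ w, T.Adj v w → w = u) (hv : IsShedding T v) :
    ∀ w, T.Adj u w → w = v := by
  by_contra hcon
  push_neg at hcon
  obtain ⟨w, hw1, hw2⟩ := hcon
  have hind : isIndep T {w} := by
    intro a ha b hb
    rw [Finset.mem_singleton] at ha hb
    rw [ha, hb]
    exact T.irrefl
  have havoid : ∀ x ∈ ({w} : Finset V), x ≠ v ∧ ¬ T.Adj v x := by
    intro x hx
    rw [Finset.mem_singleton] at hx
    rw [hx]
    exact ⟨hw2, fun h => hw1.ne' (hleaf w h)⟩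
  obtain ⟨u', hu'adj, hind'⟩ := hv {w} hind havoid
  have heq : u' = u := hleaf u' hu'adj
  exact hind' (Finset.mem_insert_self u' {w})
    (Finset.mem_insert_of_mem (Finset.mem_singleton_self w)) (heq.symm ▸ hw1)

lemma two_vertex_iso {T : SimpleGraph V} (hT : T.IsTree) {v u : V}
    (hadj : T.Adj v u) (hv : ∀ w, T.Adj v w → w = u) (hu : ∀ w, T.Adj u w → w = v) :
    Nonempty (T ≃g (⊤ : SimpleGraph (Fin 2))) := by
  classical
  have hne : v ≠ u := hadj.ne
  have key : ∀ {a x : V} (p : T.Walk a x), (a = v ∨ a = u) → (x = v ∨ x = u) := by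
    intro a x p
    induction p with
    | nil => exact id
    | cons h q ih =>
      intro ha
      apply ih
      rcases ha with rfl | rfl
      · exact Or.inr (hv _ h)
      · exact Or.inl (hu _ h)
  have hall : ∀ x : V, x = v ∨ x = u := by
    intro x
    obtain ⟨p⟩ := hT.isConnected.preconnected v x
    exact key p (Or.inl rfl)
  refine ⟨⟨⟨fun x => if x = v then 0 else 1, fun i => if i = 0 then v else u, ?_, ?_⟩, ?_⟩⟩
  · intro x
    rcases hall x with rfl | rfl
    · simp
    · simp [hne.symm, hne]
  · intro i
    fin_cases i <;> simp [hne, hne.symm]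
  · intro a b
    simp only [Equiv.coe_fn_mk, top_adj]
    rcases hall a with rfl | rfl <;> rcases hall b with rfl | rfl
    · simp
    · simpa [hne.symm, hne] using hadj
    · simpa [hne.symm, hne] using hadj.symm
    · simp


/-- A tree has a maximum independent set consisting only of shedding vertices
iff it is isomorphic to `K₂`. -/
theorem stmt17 (T : SimpleGraph V) (hT : T.IsTree) :
    (∃ S : Finset V, isMaxIndep T S ∧ ∀ v ∈ S, IsShedding T v) ↔
      Nonempty (T ≃g (⊤ : SimpleGraph (Fin 2))) := by
  classical
  constructor
  · rintro ⟨S, ⟨hSi, hScard⟩, hShed⟩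
    by_cases hleafcase : ∃ v ∈ S, ∃ u, T.Adj v u ∧ ∀ w, T.Adj v w → w = u
    · obtain ⟨v, hvS, u, hadj, huniq⟩ := hleafcase
      exact two_vertex_iso hT hadj huniq (leaf_shedding hadj huniq (hShed v hvS))
    · push_neg at hleafcase
      exfalso
      have hsupp : ∀ v ∈ S, ∃ u, T.Adj v u ∧ ∀ w, T.Adj u w → w = v :=
        fun v hv => shedding_support hT (hShed v hv)
      set ℓ : V → V := fun v =>
        if h : ∃ u, T.Adj v u ∧ ∀ w, T.Adj u w → w = v then h.choose else v with hℓ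
      have hℓspec : ∀ v ∈ S, T.Adj v (ℓ v) ∧ ∀ w, T.Adj (ℓ v) w → w = v := by
        intro v hv
        have h := hsupp v hv
        simpa [hℓ, dif_pos h] using h.choose_spec
      set L := S.image ℓ with hL
      have hinj : Set.InjOn ℓ S := by
        intro x hx y hy hxy
        exact ((hℓspec x hx).2 y (hxy ▸ ((hℓspec y hy).1.symm))).symm
      have hcardL : L.card = S.card := Finset.card_image_of_injOn hinj
      have hLind : isIndep T L := by
        intro p hp q hq hpq
        obtain ⟨x, hx, rfl⟩ := Finset.mem_image.1 hp
        obtain ⟨y, hy, rfl⟩ := Finset.mem_image.1 hq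
        have hyx : ℓ y = x := (hℓspec x hx).2 _ hpq
        -- then x is a leaf, contradiction
        have hadjxy : T.Adj x y := hyx ▸ (hℓspec y hy).1.symm
        obtain ⟨w, hw, hwne⟩ := hleafcase x hx y hadjxy
        exact hwne ((hℓspec y hy).2 w (hyx.symm ▸ hw))
      have hcover : ∀ z : V, z ∈ S ∨ z ∈ L := by
        intro z
        by_contra hz
        push_neg at hz
        obtain ⟨hzS, hzL⟩ := hz
        by_cases hadjL : ∃ p ∈ L, T.Adj z p
        · obtain ⟨p, hp, hzp⟩ := hadjL
          obtain ⟨x, hx, rfl⟩ := Finset.mem_image.1 hp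
          exact hzS (((hℓspec x hx).2 z hzp.symm) ▸ hx)
        · push_neg at hadjL
          have hind : isIndep T (insert z L) := by
            intro p hp q hq hpq
            rcases Finset.mem_insert.1 hp with rfl | hp' <;>
              rcases Finset.mem_insert.1 hq with rfl | hq'
            · exact T.irrefl hpq
            · exact hadjL q hq' hpq
            · exact hadjL p hp' hpq.symm
            · exact hLind hp' hq' hpq
          have hc : (insert z L).card = _root_.indepNum T + 1 := by
            rw [Finset.card_insert_of_notMem hzL, hcardL, hScard]
          have := card_le_indepNum hind
          omega
      -- S is nonempty
      have hVne : Nonempty V := hT.isConnected.nonempty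
      obtain ⟨x₀⟩ := hVne
      have h1le : 1 ≤ _root_.indepNum T := by
        have : isIndep T {x₀} := by
          intro p hp q hq
          rw [Finset.mem_singleton] at hp hq
          rw [hp, hq]; exact T.irrefl
        simpa using card_le_indepNum this
      by_cases h2 : 2 ≤ S.card
      · obtain ⟨v, hvS, v', hv'S, hvv'⟩ := Finset.one_lt_card.1 h2
        obtain ⟨w⟩ := hT.isConnected.preconnected v v'
        obtain ⟨q, hq⟩ := w.toPath
        cases q with
        | nil => exact hvv' rfl
        | @cons _ b _ h r =>
          rcases hcover b with hbS | hbL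
          · exact hSi hvS hbS h
          · obtain ⟨x, hx, rfl⟩ := Finset.mem_image.1 hbL
            have hxv : v = x := (hℓspec x hx).2 v h.symm
            cases r with
            | nil => exact hSi hvS hv'S h
            | @cons _ c _ h' r' =>
              have hcv : c = v := hxv ▸ ((hℓspec x hx).2 c h')
              have hvmem : v ∈ (Walk.cons h' r').support := by
                rw [Walk.support_cons]
                exact List.mem_cons_of_mem _ (hcv ▸ r'.start_mem_support)
              have hnodup := hq.2
              rw [Walk.support_cons, List.nodup_cons] at hnodup
              exact hnodup.1 hvmem
      · -- S.card = 1
        have hcard1 : S.card = 1 := by omega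
        obtain ⟨v₀, hv₀⟩ := Finset.card_eq_one.1 hcard1
        have hv₀S : v₀ ∈ S := hv₀ ▸ Finset.mem_singleton_self v₀
        obtain ⟨w, hw, hwne⟩ := hleafcase v₀ hv₀S (ℓ v₀) (hℓspec v₀ hv₀S).1
        rcases hcover w with hwS | hwL
        · rw [hv₀, Finset.mem_singleton] at hwS
          exact T.irrefl (hwS ▸ hw)
        · obtain ⟨x, hx, rfl⟩ := Finset.mem_image.1 hwL
          rw [hv₀, Finset.mem_singleton] at hx
          exact hwne (by rw [hx])
  · rintro ⟨e⟩
    have key : ∀ x y : V, T.Adj x y ↔ x ≠ y := by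
      intro x y
      rw [← e.map_adj_iff, top_adj]
      exact e.injective.ne_iff
    set a := e.symm 0 with ha
    set b := e.symm 1 with hb
    have hne : a ≠ b := by
      intro h
      have := e.toEquiv.symm.injective h
      simp at this
    have hall : ∀ x : V, x = a ∨ x = b := by
      intro x
      have h : ∀ i : Fin 2, i = 0 ∨ i = 1 := by decide
      rcases h (e x) with h' | h'
      · exact Or.inl (by rw [ha, ← h', RelIso.symm_apply_apply])
      · exact Or.inr (by rw [hb, ← h', RelIso.symm_apply_apply])
    have hone : _root_.indepNum T = 1 := by
      refine le_antisymm (csSup_le ⟨0, ∅, fun p hp => absurd hp (by simp), rfl⟩ ?_) ?_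
      · rintro n ⟨S, hS, rfl⟩
        by_contra hn
        push_neg at hn
        obtain ⟨x, hx, y, hy, hxy⟩ := Finset.one_lt_card.1 hn
        exact hS hx hy ((key x y).2 hxy)
      · have : isIndep T {a} := by
          intro p hp q hq
          rw [Finset.mem_singleton] at hp hq
          rw [hp, hq]; exact T.irrefl
        simpa using card_le_indepNum this
    refine ⟨{a}, ⟨?_, by simp [hone]⟩, ?_⟩
    · intro p hp q hq
      rw [Finset.mem_singleton] at hp hq
      rw [hp, hq]; exact T.irrefl
    · intro v hv S' hS' havoid
      rw [Finset.mem_singleton] at hv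
      subst hv
      have hS'empty : ∀ w ∈ S', False := by
        intro w hw
        obtain ⟨h1, h2⟩ := havoid w hw
        rw [key] at h2
        push_neg at h2
        exact h1 h2.symm
      refine ⟨b, (key a b).2 hne, ?_⟩
      intro p hp q hq
      rcases Finset.mem_insert.1 hp with rfl | hp'
      · rcases Finset.mem_insert.1 hq with rfl | hq'
        · exact T.irrefl
        · exact absurd hq' (by intro h; exact hS'empty _ h)
      · exact absurd hp' (by intro h; exact hS'empty _ h)
end

section
/- For every tree T not isomorphic to K₂: (i) |Shed(T)| ≤ α(T); (ii) if Shed(T) is an independent set, then |Shed(T)| ≤ α(T) − 1. -/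
open SimpleGraph

variable {V : Type*} [Fintype V] [DecidableEq V]

lemma path_unique_of_acyclic {T : SimpleGraph V} (hA : T.IsAcyclic) {u u' : V}
    (p q : T.Walk u u') (hp : p.IsPath) (hq : q.IsPath) : p = q := by
  have := (SimpleGraph.isAcyclic_iff_path_unique.mp hA) (⟨p, hp⟩ : T.Path u u') ⟨q, hq⟩
  exact congrArg Subtype.val this

lemma no_triangle {T : SimpleGraph V} (hA : T.IsAcyclic) {a b c : V}
    (h1 : T.Adj a b) (h2 : T.Adj b c) (h3 : T.Adj a c) : False := by
  have hp1 : (Walk.cons h3 Walk.nil : T.Walk a c).IsPath := by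
    simp [Walk.cons_isPath_iff, h3.ne]
  have hp2 : (Walk.cons h1 (Walk.cons h2 Walk.nil) : T.Walk a c).IsPath := by
    simp [Walk.cons_isPath_iff, h1.ne, h2.ne, h3.ne]
  have := path_unique_of_acyclic hA _ _ hp1 hp2
  simpa using congrArg Walk.length this

lemma no_five {T : SimpleGraph V} (hA : T.IsAcyclic) {v u u' w w' : V}
    (hu : T.Adj v u) (hu' : T.Adj v u') (hw : T.Adj u w) (hw' : T.Adj u' w')
    (huu' : u ≠ u') (hvw : ¬ T.Adj v w) (hvw' : ¬ T.Adj v w')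
    (hww' : T.Adj w w') : False := by
  have hwu' : w ≠ u' := fun h => hvw (h ▸ hu')
  have hw'u : w' ≠ u := fun h => hvw' (h ▸ hu)
  have hp1 : (Walk.cons hu.symm (Walk.cons hu' Walk.nil) : T.Walk u u').IsPath := by
    simp [Walk.cons_isPath_iff, hu.ne', hu'.ne, huu']
  have hp2 : (Walk.cons hw (Walk.cons hww' (Walk.cons hw'.symm Walk.nil)) : T.Walk u u').IsPath := by
    simp [Walk.cons_isPath_iff, hw.ne, hww'.ne, hw'.ne', hwu', hw'u, huu', Ne.symm hw'u, Ne.symm hwu']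
  have := path_unique_of_acyclic hA _ _ hp1 hp2
  simpa using congrArg Walk.length this

lemma indepNum_ge (G : SimpleGraph V) (S : Finset V) (h : isIndep G S) :
    S.card ≤ _root_.indepNum G := by
  apply le_csSup
  · exact ⟨Fintype.card V, fun n ⟨S', _, hc⟩ => hc ▸ Finset.card_le_univ S'⟩
  · exact ⟨S, h, rfl⟩

/-- A shedding vertex of a tree has a leaf neighbor. -/
lemma shed_support {T : SimpleGraph V} (hA : T.IsAcyclic) {v : V} (hv : IsShedding T v) :
    ∃ u, T.Adj v u ∧ ∀ x, T.Adj u x → x = v := by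
  by_contra h
  push_neg at h
  classical
  have h' : ∀ u : V, ∃ x, T.Adj v u → (T.Adj u x ∧ x ≠ v) := by
    intro u
    by_cases hu : T.Adj v u
    · obtain ⟨x, hx1, hx2⟩ := h u hu
      exact ⟨x, fun _ => ⟨hx1, hx2⟩⟩
    · exact ⟨v, fun hc => absurd hc hu⟩
  choose g hg using h'
  set S : Finset V := (T.neighborFinset v).image g with hS
  have memS : ∀ x ∈ S, ∃ u, T.Adj v u ∧ g u = x := by
    intro x hx
    simp only [hS, Finset.mem_image, mem_neighborFinset] at hx
    obtain ⟨u, hu, hgu⟩ := hx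
    exact ⟨u, hu, hgu⟩
  have hSind : isIndep T S := by
    intro a ha b hb hab
    obtain ⟨ua, hua, hga⟩ := memS a ha
    obtain ⟨ub, hub, hgb⟩ := memS b hb
    obtain ⟨hadj_a, _⟩ := hg ua hua
    obtain ⟨hadj_b, _⟩ := hg ub hub
    rcases eq_or_ne ua ub with h' | h'
    · subst h'; rw [hga] at hgb; subst hgb
      exact hab.ne rfl
    · subst hga; subst hgb
      exact no_five hA hua hub hadj_a hadj_b h'
        (fun hc => no_triangle hA hua hadj_a hc)
        (fun hc => no_triangle hA hub hadj_b hc) hab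
  have hScond : ∀ w ∈ S, w ≠ v ∧ ¬ T.Adj v w := by
    intro w hw
    obtain ⟨u, hu, hgu⟩ := memS w hw
    obtain ⟨hadj, hne⟩ := hg u hu
    subst hgu
    exact ⟨hne, fun hc => no_triangle hA hu hadj hc⟩
  obtain ⟨u₀, hu₀, hind⟩ := hv S hSind hScond
  obtain ⟨hadj₀, _⟩ := hg u₀ hu₀
  have h1 : u₀ ∈ insert u₀ S := Finset.mem_insert_self _ _
  have h2 : g u₀ ∈ insert u₀ S := Finset.mem_insert_of_mem
    (by simp only [hS, Finset.mem_image, mem_neighborFinset]; exact ⟨u₀, hu₀, rfl⟩)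
  exact hind h1 h2 hadj₀

/-- Two mutually-sole-neighbor adjacent vertices in a connected graph give K₂. -/
lemma iso_K2 {T : SimpleGraph V} (hc : T.Connected) {a b : V} (hab : T.Adj a b)
    (ha : ∀ x, T.Adj a x → x = b) (hb : ∀ x, T.Adj b x → x = a) :
    Nonempty (T ≃g (⊤ : SimpleGraph (Fin 2))) := by
  have hall : ∀ x : V, x = a ∨ x = b := by
    have key : ∀ (y x : V) (_ : T.Walk y x), (y = a ∨ y = b) → (x = a ∨ x = b) := by
      intro y x p
      induction p with
      | nil => exact id
      | cons h p ih =>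
        rename_i c d _
        intro hy
        apply ih
        rcases hy with rfl | rfl
        · exact Or.inr (ha _ h)
        · exact Or.inl (hb _ h)
    intro x
    exact key a x (hc.preconnected a x).some (Or.inl rfl)
  have hne : a ≠ b := hab.ne
  refine ⟨⟨⟨fun x => if x = a then 0 else 1, fun i => if i = 0 then a else b, ?_, ?_⟩, ?_⟩⟩
  · intro x
    rcases hall x with rfl | rfl
    · simp
    · simp [hne.symm, hne]
  · intro i
    fin_cases i <;> simp [hne, Ne.symm hne]
  · intro x y
    simp only [Equiv.coe_fn_mk, top_adj]
    rcases hall x with rfl | rfl <;> rcases hall y with rfl | rfl <;>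
      simp [hne, hne.symm, hab, hab.symm, T.irrefl]

/-- For a tree `T ≠ K₂`: `|Shed(T)| ≤ α(T)`, and if `Shed(T)` is independent
then `|Shed(T)| ≤ α(T) − 1`. -/
theorem stmt18 (T : SimpleGraph V) (hT : T.IsTree)
    (hK2 : IsEmpty (T ≃g (⊤ : SimpleGraph (Fin 2)))) :
    {v : V | IsShedding T v}.ncard ≤ _root_.indepNum T ∧
      ({v : V | IsShedding T v}.Pairwise (fun a b => ¬ T.Adj a b) →
        {v : V | IsShedding T v}.ncard ≤ _root_.indepNum T - 1) := by
  classical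
  have hA := hT.IsAcyclic
  have hc := hT.isConnected
  have hK2' : ∀ {a b : V}, T.Adj a b → (∀ x, T.Adj a x → x = b) →
      (∀ x, T.Adj b x → x = a) → False :=
    fun hab ha hb => hK2.elim (iso_K2 hc hab ha hb).some
  have H : ∀ v : V, ∃ u, IsShedding T v → T.Adj v u ∧ ∀ x, T.Adj u x → x = v := by
    intro v
    by_cases h : IsShedding T v
    · obtain ⟨u, hu⟩ := shed_support hA h; exact ⟨u, fun _ => hu⟩
    · exact ⟨v, fun h' => absurd h' h⟩
  choose l hl using H
  set Sh : Finset V := Finset.univ.filter (fun v => IsShedding T v) with hSh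
  have memSh : ∀ v, v ∈ Sh ↔ IsShedding T v := by intro v; simp [hSh]
  have hset : {v : V | IsShedding T v} = ↑Sh := by
    ext v; simp [hSh]
  rw [hset, Set.ncard_coe_finset]
  set L : Finset V := Sh.image l with hL
  have hinj : Set.InjOn l Sh := by
    intro x hx y hy hxy
    obtain ⟨hx1, hx2⟩ := hl x ((memSh x).mp hx)
    obtain ⟨hy1, hy2⟩ := hl y ((memSh y).mp hy)
    have : T.Adj (l x) y := hxy ▸ hy1.symm
    exact (hx2 y this).symm
  have hLcard : L.card = Sh.card := Finset.card_image_of_injOn hinj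
  have memL : ∀ x ∈ L, ∃ v, IsShedding T v ∧ l v = x := by
    intro x hx
    simp only [hL, Finset.mem_image] at hx
    obtain ⟨v, hv, hlv⟩ := hx
    exact ⟨v, (memSh v).mp hv, hlv⟩
  have hLind : isIndep T L := by
    intro a ha b hb hab
    obtain ⟨v, hvS, rfl⟩ := memL a ha
    obtain ⟨v', hv'S, rfl⟩ := memL b hb
    obtain ⟨hv1, hv2⟩ := hl v hvS
    obtain ⟨hv'1, hv'2⟩ := hl v' hv'S
    -- l v adjacent to l v' ⇒ l v' = v
    have e1 : l v' = v := hv2 _ hab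
    have e2 : l v = v' := by
      apply hv'2
      rw [e1]
      exact hv1
    -- now v, v' mutual sole neighbors
    have hadj : T.Adj v v' := e2 ▸ hv1
    exact hK2' hadj (fun x hx => hv'2 x (e1.symm ▸ hx))
      (fun x hx => hv2 x (e2.symm ▸ hx))
  have part1 : Sh.card ≤ _root_.indepNum T := hLcard ▸ indepNum_ge T L hLind
  refine ⟨part1, fun hp => ?_⟩
  rcases Finset.eq_empty_or_nonempty Sh with hE | ⟨v₀, hv₀⟩
  · simp [hE]
  have hv₀S : IsShedding T v₀ := (memSh v₀).mp hv₀
  obtain ⟨hadj₀, hleaf₀⟩ := hl v₀ hv₀S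
  have hexw : ∃ w, T.Adj v₀ w ∧ w ≠ l v₀ := by
    by_contra hcon
    push_neg at hcon
    exact hK2' hadj₀ (fun x hx => hcon x hx) hleaf₀
  obtain ⟨w, hwadj, hwne⟩ := hexw
  have hwnotShed : ¬ IsShedding T w := by
    intro hws
    have hne : w ≠ v₀ := hwadj.ne'
    exact hp (Finset.mem_coe.mpr ((memSh w).mpr hws)) (Finset.mem_coe.mpr hv₀) hne hwadj.symm
  have hwnotL : w ∉ L := by
    intro hwL
    obtain ⟨s, hsS, hls⟩ := memL w hwL
    obtain ⟨hs1, hs2⟩ := hl s hsS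
    have : v₀ = s := hs2 v₀ (hls ▸ hwadj.symm)
    exact hwne (by rw [← hls, ← this])
  have hL'ind : isIndep T (insert w L) := by
    intro a ha b hb hab
    rcases Finset.mem_insert.mp ha with rfl | haL <;>
      rcases Finset.mem_insert.mp hb with rfl | hbL
    · exact hab.ne rfl
    · obtain ⟨s, hsS, rfl⟩ := memL b hbL
      obtain ⟨hs1, hs2⟩ := hl s hsS
      have : a = s := hs2 a hab.symm
      exact hwnotShed (this ▸ hsS)
    · obtain ⟨s, hsS, rfl⟩ := memL a haL
      obtain ⟨hs1, hs2⟩ := hl s hsS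
      have : b = s := hs2 b hab
      exact hwnotShed (this ▸ hsS)
    · exact hLind haL hbL hab
  have hcard' : (insert w L).card = Sh.card + 1 := by
    rw [Finset.card_insert_of_notMem hwnotL, hLcard]
  have : Sh.card + 1 ≤ _root_.indepNum T := hcard' ▸ indepNum_ge T _ hL'ind
  exact Nat.le_sub_one_of_lt this
end
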